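/- Let s₀ be a periodic variable whose period p₀ divides all other periods. Every product t of linear terms each containing s₀, of length exceeding Σ_{bounded s}(b(s)−1) + Σ_{periodic s}(p(s)−1), admits a strict subproduct t' with nf(t') = nf(t). -/

import Mathlib

/-!
Auxiliary development for `s0_anchored_cutoff_dvd`.

We expand each product of linear factors `y + ∑_{x ∈ W} v x` into a sum of
monomials indexed by "assignments" `σ : Fin k → Option α` (choosing, for each
factor, either the anchor `y` or a letter of `W`).  A combinatorial exchange
argument (via Hall's marriage theorem) shows that all monomial count-vectors
realizable on all positions are realizable (up to the relevant congruences)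
on a fixed subset of positions missing `p s₀` indices, which yields the
desired strict subproduct with the same value in every idempotent model.
-/

set_option linter.unusedSectionVars false
set_option maxHeartbeats 1000000
open Finset

namespace S0Cutoff


variable {k : ℕ} {α : Type*} [Fintype α] [DecidableEq α]

/-- admissible partial assignments: supported inside `S`, respecting `W`. -/
def adm (W : Fin k → Finset α) (S : Finset (Fin k)) (σ : Fin k → Option α) : Prop :=
  ∀ i x, σ i = some x → i ∈ S ∧ x ∈ W i

/-- number of positions assigned letter `x`. -/
def cnt (σ : Fin k → Option α) (x : α) : ℕ :=
  (univ.filter (fun i => σ i = some x)).card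

/-- counts bounded by capacities. -/
def small (cap : α → ℕ) (σ : Fin k → Option α) : Prop := ∀ x, cnt σ x ≤ cap x

/-- support of an assignment. -/
def supp (σ : Fin k → Option α) : Finset (Fin k) :=
  univ.filter (fun i => σ i ≠ none)

/-- number of unassigned positions. -/
def nones (σ : Fin k → Option α) : ℕ :=
  (univ.filter (fun i => σ i = none)).card

lemma cnt_sum (σ : Fin k → Option α) (L : Finset α) :
    ∑ x ∈ L, cnt σ x = (univ.filter (fun i => ∃ x ∈ L, σ i = some x)).card := by
  have h : univ.filter (fun i => ∃ x ∈ L, σ i = some x)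
      = L.biUnion (fun x => univ.filter (fun i => σ i = some x)) := by
    ext i; simp [Finset.mem_biUnion]
  rw [h, Finset.card_biUnion]
  · rfl
  · intro x hx y hy hxy
    refine Finset.disjoint_left.2 (fun i hi hi' => hxy ?_)
    simp only [mem_filter] at hi hi'
    have := hi.2.symm.trans hi'.2
    exact Option.some_injective _ this

lemma supp_card (σ : Fin k → Option α) : (supp σ).card = ∑ x, cnt σ x := by
  rw [cnt_sum]
  congr 1
  ext i
  simp [supp, Option.ne_none_iff_exists']

lemma nones_add_sum_cnt (σ : Fin k → Option α) :
    nones σ + ∑ x, cnt σ x = k := by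
  rw [cnt_sum]
  have h : univ.filter (fun i => ∃ x ∈ (univ : Finset α), σ i = some x)
      = univ.filter (fun i => ¬ (σ i = none)) := by
    ext i; simp [Option.ne_none_iff_exists']
  rw [h, nones, Finset.card_filter_add_card_filter_not]
  simp

lemma cnt_eq_zero (σ : Fin k → Option α) (x : α) (h : ∀ i, σ i ≠ some x) :
    cnt σ x = 0 := by
  rw [cnt, Finset.card_eq_zero, Finset.filter_eq_empty_iff]
  intro i _
  exact h i

/-- Key exchange step: if `τ` is a maximum admissible small assignment on `S` and
`τ i₀ = none`, then the counts of any admissible small `σ` on `S` can be realized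
on `S.erase i₀`. -/
lemma core (W : Fin k → Finset α) (cap : α → ℕ) (S : Finset (Fin k))
    (τ : Fin k → Option α) (hτa : adm W S τ) (hτs : small cap τ)
    (hmax : ∀ τ', adm W S τ' → small cap τ' → (supp τ').card ≤ (supp τ).card)
    (i₀ : Fin k) (hi₀S : i₀ ∈ S) (hτi₀ : τ i₀ = none)
    (σ : Fin k → Option α) (hσa : adm W S σ) (hσs : small cap σ) :
    ∃ σ', adm W (S.erase i₀) σ' ∧ ∀ x, cnt σ' x = cnt σ x := by
  classical
  -- main Hall-type inequality
  have main : ∀ L : Finset α, ∑ x ∈ L, cnt σ x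
      ≤ ((S.erase i₀).filter (fun i => ∃ x ∈ L, x ∈ W i)).card := by
    intro L
    by_contra hcon
    push_neg at hcon
    set PL := S.filter (fun i => ∃ x ∈ L, x ∈ W i) with hPLdef
    set U := univ.filter (fun i => ∃ x ∈ L, σ i = some x) with hUdef
    have hUcard : U.card = ∑ x ∈ L, cnt σ x := (cnt_sum σ L).symm
    have hUPL : U ⊆ PL := by
      intro i hi
      simp only [hUdef, mem_filter, mem_univ, true_and] at hi
      obtain ⟨x, hxL, hx⟩ := hi
      obtain ⟨hiS, hiW⟩ := hσa i x hx
      simp only [hPLdef, mem_filter]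
      exact ⟨hiS, x, hxL, hiW⟩
    have herase : (S.erase i₀).filter (fun i => ∃ x ∈ L, x ∈ W i) = PL.erase i₀ :=
      Finset.filter_erase _ _ _
    rw [herase] at hcon
    have h1 : U.card ≤ PL.card := Finset.card_le_card hUPL
    have hi₀PL : i₀ ∈ PL := by
      by_contra h
      rw [Finset.erase_eq_of_notMem h] at hcon
      omega
    have hce : (PL.erase i₀).card = PL.card - 1 := Finset.card_erase_of_mem hi₀PL
    have hPLpos : 1 ≤ PL.card := Finset.card_pos.2 ⟨i₀, hi₀PL⟩
    have hUeq : U = PL := Finset.eq_of_subset_of_card_le hUPL (by omega)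
    -- build the hybrid assignment μ
    set μ : Fin k → Option α := fun i => if i ∈ PL then σ i else τ i with hμdef
    have hμa : adm W S μ := by
      intro i x hx
      simp only [hμdef] at hx
      split at hx
      · exact hσa i x hx
      · exact hτa i x hx
    have hμs : small cap μ := by
      intro x
      by_cases hxL : x ∈ L
      · refine le_trans (Finset.card_le_card ?_) (hσs x)
        intro i hi
        simp only [mem_filter, mem_univ, true_and, hμdef] at hi ⊢
        split at hi
        · exact hi
        · rename_i hiPL
          obtain ⟨hiS, hiW⟩ := hτa i x hi
          exact absurd (by simp only [hPLdef, mem_filter]; exact ⟨hiS, x, hxL, hiW⟩) hiPL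
      · refine le_trans (Finset.card_le_card ?_) (hτs x)
        intro i hi
        simp only [mem_filter, mem_univ, true_and, hμdef] at hi ⊢
        split at hi
        · rename_i hiPL
          have hiU : i ∈ U := hUeq ▸ hiPL
          simp only [hUdef, mem_filter, mem_univ, true_and] at hiU
          obtain ⟨x', hx'L, hx'⟩ := hiU
          rw [hi] at hx'
          exact absurd (Option.some_injective _ hx' ▸ hx'L) hxL
        · exact hi
    have hsub : insert i₀ (supp τ) ⊆ supp μ := by
      intro i hi
      rcases Finset.mem_insert.1 hi with rfl | hi
      · have hiU : i ∈ U := hUeq ▸ hi₀PL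
        simp only [hUdef, mem_filter, mem_univ, true_and] at hiU
        obtain ⟨x, _, hx⟩ := hiU
        simp only [supp, mem_filter, mem_univ, true_and, hμdef, if_pos hi₀PL, hx]
        simp
      · simp only [supp, mem_filter, mem_univ, true_and] at hi ⊢
        simp only [hμdef]
        split
        · rename_i hiPL
          have hiU : i ∈ U := hUeq ▸ hiPL
          simp only [hUdef, mem_filter, mem_univ, true_and] at hiU
          obtain ⟨x, _, hx⟩ := hiU
          simp [hx]
        · exact hi
    have hi₀supp : i₀ ∉ supp τ := by simp [supp, hτi₀]
    have hcard : (supp τ).card + 1 ≤ (supp μ).card := by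
      calc (supp τ).card + 1 = (insert i₀ (supp τ)).card := by
            rw [Finset.card_insert_of_notMem hi₀supp]
          _ ≤ (supp μ).card := Finset.card_le_card hsub
    have := hmax μ hμa hμs
    omega
  -- set up Hall's theorem
  set Slots : Finset ((_ : α) × ℕ) :=
    (univ : Finset α).sigma (fun x => Finset.range (cnt σ x)) with hSlots
  set t : {q // q ∈ Slots} → Finset (Fin k) :=
    fun q => (S.erase i₀).filter (fun i => q.1.1 ∈ W i) with ht
  have hall : ∀ Q : Finset {q // q ∈ Slots}, Q.card ≤ (Q.biUnion t).card := by
    intro Q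
    set L := Q.image (fun q => q.1.1) with hL
    have hQB : Q.biUnion t = (S.erase i₀).filter (fun i => ∃ x ∈ L, x ∈ W i) := by
      ext i
      simp only [Finset.mem_biUnion, ht, mem_filter, hL, Finset.mem_image]
      constructor
      · rintro ⟨q, hq, hi, hw⟩
        exact ⟨hi, q.1.1, ⟨q, hq, rfl⟩, hw⟩
      · rintro ⟨hi, x, ⟨q, hq, rfl⟩, hw⟩
        exact ⟨q, hq, hi, hw⟩
    have hQcard : Q.card ≤ ∑ x ∈ L, cnt σ x := by
      have himg : Q.image Subtype.val ⊆ L.sigma (fun x => Finset.range (cnt σ x)) := by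
        intro q hq
        simp only [Finset.mem_image] at hq
        obtain ⟨q', hq', rfl⟩ := hq
        have := q'.2
        simp only [hSlots, Finset.mem_sigma, mem_univ, true_and] at this
        simp only [Finset.mem_sigma]
        exact ⟨Finset.mem_image.2 ⟨q', hq', rfl⟩, this⟩
      calc Q.card = (Q.image Subtype.val).card :=
            (Finset.card_image_of_injective _ Subtype.val_injective).symm
        _ ≤ (L.sigma (fun x => Finset.range (cnt σ x))).card := Finset.card_le_card himg
        _ = ∑ x ∈ L, cnt σ x := by rw [Finset.card_sigma]; simp
    rw [hQB]
    exact le_trans hQcard (main L)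
  obtain ⟨f, hfinj, hf⟩ := (Finset.all_card_le_biUnion_card_iff_exists_injective t).1 hall
  -- define σ' from the injection f
  set σ' : Fin k → Option α :=
    fun i => if h : ∃ q, f q = i then some (h.choose.1.1) else none with hσ'def
  have hσ'some : ∀ i x, σ' i = some x ↔ ∃ q : {q // q ∈ Slots}, f q = i ∧ q.1.1 = x := by
    intro i x
    constructor
    · intro h
      simp only [hσ'def] at h
      split at h
      · rename_i hex
        exact ⟨hex.choose, hex.choose_spec, Option.some_injective _ h⟩
      · exact absurd h (by simp)
    · rintro ⟨q, hq, rfl⟩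
      have hex : ∃ q', f q' = i := ⟨q, hq⟩
      simp only [hσ'def, dif_pos hex]
      have : hex.choose = q := hfinj (hex.choose_spec.trans hq.symm)
      rw [this]
  refine ⟨σ', ?_, ?_⟩
  · intro i x hx
    obtain ⟨q, hq, rfl⟩ := (hσ'some i x).1 hx
    have := hf q
    rw [hq, ht] at this
    simp only [mem_filter] at this
    exact this
  · intro x
    have himage : univ.filter (fun i => σ' i = some x)
        = (univ.filter (fun q : {q // q ∈ Slots} => q.1.1 = x)).image f := by
      ext i
      simp only [mem_filter, mem_univ, true_and, Finset.mem_image]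
      rw [hσ'some]
      constructor
      · rintro ⟨q, hq, hqx⟩; exact ⟨q, by simpa using hqx, hq⟩
      · rintro ⟨q, hq, hqi⟩; exact ⟨q, hqi, by simpa using hq⟩
    rw [cnt, himage, Finset.card_image_of_injective _ hfinj]
    -- count slots with letter x
    have : (univ.filter (fun q : {q // q ∈ Slots} => q.1.1 = x)).card
        = (Slots.filter (fun q => q.1 = x)).card := by
      refine Finset.card_bij (fun q _ => q.1) ?_ ?_ ?_
      · intro q hq
        simp only [mem_filter, mem_univ, true_and] at hq
        simp only [mem_filter]
        exact ⟨q.2, hq⟩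
      · intro q1 _ q2 _ h
        exact Subtype.val_injective h
      · intro q hq
        simp only [mem_filter] at hq
        exact ⟨⟨q, hq.1⟩, by simp [hq.2], rfl⟩
    rw [this]
    have : Slots.filter (fun q => q.1 = x) = ({x} : Finset α).sigma
        (fun y => Finset.range (cnt σ y)) := by
      ext q
      simp only [mem_filter, hSlots, Finset.mem_sigma, mem_univ, true_and,
        Finset.mem_singleton]
      tauto
    rw [this, Finset.card_sigma]
    simp


lemma trim (W : Fin k → Finset α) (S : Finset (Fin k)) (σ : Fin k → Option α)
    (hσ : adm W S σ) (m : α → ℕ) (hm : ∀ x, m x ≤ cnt σ x) :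
    ∃ σ₁, adm W S σ₁ ∧ ∀ x, cnt σ₁ x = m x := by
  classical
  choose K hK1 hK2 using fun x =>
    Finset.exists_subset_card_eq (s := univ.filter (fun i => σ i = some x)) (n := m x) (hm x)
  refine ⟨fun i => (σ i).bind (fun x => if i ∈ K x then some x else none), ?_, ?_⟩
  · intro i x h
    simp only at h
    cases hσi : σ i with
    | none => rw [hσi] at h; simp at h
    | some x' =>
      rw [hσi] at h
      simp only [Option.bind_some] at h
      split at h
      · exact (Option.some_injective _ h) ▸ hσ i x' hσi
      · simp at h
  · intro x
    have : univ.filter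
        (fun i => (σ i).bind (fun y => if i ∈ K y then some y else none) = some x) = K x := by
      ext i
      simp only [mem_filter, mem_univ, true_and]
      constructor
      · intro h
        cases hσi : σ i with
        | none => rw [hσi] at h; simp at h
        | some x' =>
          rw [hσi] at h
          simp only [Option.bind_some] at h
          split at h
          · rename_i hiK
            exact (Option.some_injective _ h) ▸ hiK
          · simp at h
      · intro hiK
        have hfi : σ i = some x := (Finset.mem_filter.1 (hK1 x hiK)).2
        rw [hfi]
        simp [hiK]
    rw [cnt, this, hK2]

lemma iter (W : Fin k → Finset α) (cap : α → ℕ) (d : ℕ) :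
    ∀ S : Finset (Fin k), (∑ x, cap x) + d ≤ S.card →
    ∃ S' : Finset (Fin k), S' ⊆ S ∧ S'.card + d = S.card ∧
      ∀ σ, adm W S σ → small cap σ →
        ∃ σ', adm W S' σ' ∧ ∀ x, cnt σ' x = cnt σ x := by
  classical
  induction d with
  | zero =>
    intro S _
    exact ⟨S, Finset.Subset.refl S, by omega, fun σ h hs => ⟨σ, h, fun _ => rfl⟩⟩
  | succ d ih =>
    intro S hS
    have hne : (univ.filter (fun σ : Fin k → Option α => adm W S σ ∧ small cap σ)).Nonempty := by
      refine ⟨fun _ => none, ?_⟩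
      simp only [mem_filter, mem_univ, true_and]
      constructor
      · intro i x h; simp at h
      · intro x
        simp [cnt]
    obtain ⟨τ, hτmem, hτmax'⟩ := Finset.exists_max_image _ (fun σ => (supp σ).card) hne
    simp only [mem_filter, mem_univ, true_and] at hτmem
    obtain ⟨hτa, hτs⟩ := hτmem
    have hτmax : ∀ τ', adm W S τ' → small cap τ' → (supp τ').card ≤ (supp τ).card := by
      intro τ' h1 h2
      exact hτmax' τ' (by simp only [mem_filter, mem_univ, true_and]; exact ⟨h1, h2⟩)
    have hsuppcard : (supp τ).card ≤ ∑ x, cap x := by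
      rw [supp_card]
      exact Finset.sum_le_sum (fun x _ => hτs x)
    have hSsupp : ¬ (S ⊆ supp τ) := by
      intro h
      have := Finset.card_le_card h
      omega
    obtain ⟨i₀, hi₀S, hi₀supp⟩ := Finset.not_subset.1 hSsupp
    have hτi₀ : τ i₀ = none := by
      by_contra h
      exact hi₀supp (by simp [supp, h])
    have hcard_erase : (S.erase i₀).card = S.card - 1 := Finset.card_erase_of_mem hi₀S
    obtain ⟨S', hS'sub, hS'card, hS'prop⟩ := ih (S.erase i₀) (by omega)
    refine ⟨S', hS'sub.trans (Finset.erase_subset _ _), by omega, ?_⟩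
    intro σ hσa hσs
    obtain ⟨σ'', hσ''a, hσ''c⟩ := core W cap S τ hτa hτs hτmax i₀ hi₀S hτi₀ σ hσa hσs
    have hσ''s : small cap σ'' := fun x => (hσ''c x) ▸ hσs x
    obtain ⟨σ', hσ'a, hσ'c⟩ := hS'prop σ'' hσ''a hσ''s
    exact ⟨σ', hσ'a, fun x => (hσ'c x).trans (hσ''c x)⟩
section Alg
variable {R : Type*} [CommSemiring R]

lemma pow_eq_pow_mod_of_pow_eq_one {u : R} {n : ℕ} (h : u ^ n = 1) (c : ℕ) :
    u ^ c = u ^ (c % n) := by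
  conv_lhs => rw [← Nat.div_add_mod c n]
  rw [pow_add, pow_mul, h, one_pow, one_mul]

lemma pow_eq_of_modEq {u : R} {n : ℕ} (h : u ^ n = 1) {a c : ℕ} (hac : a ≡ c [MOD n]) :
    u ^ a = u ^ c := by
  have hac' : a % n = c % n := hac
  rw [pow_eq_pow_mod_of_pow_eq_one h a, pow_eq_pow_mod_of_pow_eq_one h c, hac']

lemma absorb_mem (hidem : ∀ a : R, a + a = a) {γ : Type*} {s : Finset γ} {f : γ → R} {a : γ}
    (ha : a ∈ s) : f a + ∑ x ∈ s, f x = ∑ x ∈ s, f x := by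
  classical
  rw [← Finset.sum_erase_add s f ha, ← add_assoc, add_comm (f a), add_assoc, hidem]

lemma sum_absorb (hidem : ∀ a : R, a + a = a) {γ : Type*} {s : Finset γ} {f : γ → R} {c : R}
    (h : ∀ a ∈ s, f a + c = c) : (∑ x ∈ s, f x) + c = c := by
  classical
  induction s using Finset.cons_induction with
  | empty => simp
  | cons a s ha ih =>
    rw [Finset.sum_cons, add_assoc, ih (fun a ha => h a (Finset.mem_cons_of_mem ha)),
      h a (Finset.mem_cons_self a s)]

lemma sum_subset_absorb (hidem : ∀ a : R, a + a = a) {γ : Type*} {s t : Finset γ} {f : γ → R}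
    (hst : s ⊆ t) : (∑ x ∈ s, f x) + ∑ x ∈ t, f x = ∑ x ∈ t, f x :=
  sum_absorb hidem (fun a ha => absorb_mem hidem (hst ha))

lemma modeq_sum {γ : Type*} {s : Finset γ} {f g : γ → ℕ} {n : ℕ}
    (h : ∀ x ∈ s, f x ≡ g x [MOD n]) : (∑ x ∈ s, f x) ≡ (∑ x ∈ s, g x) [MOD n] := by
  classical
  induction s using Finset.cons_induction with
  | empty => rfl
  | cons a s ha ih =>
    rw [Finset.sum_cons, Finset.sum_cons]
    exact (h a (Finset.mem_cons_self a s)).add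
      (ih (fun x hx => h x (Finset.mem_cons_of_mem hx)))

lemma prod_val (y : R) (v : α → R) (σ : Fin k → Option α) :
    (∏ i, (σ i).elim y v) = y ^ nones σ * ∏ x, v x ^ cnt σ x := by
  classical
  have h := Finset.prod_fiberwise_of_maps_to (s := (univ : Finset (Fin k)))
    (t := (univ : Finset (Option α))) (g := σ) (fun i _ => Finset.mem_univ (σ i))
    (fun i => (σ i).elim y v)
  rw [← h]
  have h2 : ∀ o ∈ (univ : Finset (Option α)),
      (∏ i ∈ univ.filter (fun i => σ i = o), (σ i).elim y v)
      = (o.elim y v) ^ (univ.filter (fun i => σ i = o)).card := by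
    intro o _
    rw [← Finset.prod_const]
    exact Finset.prod_congr rfl (fun i hi => by rw [(Finset.mem_filter.1 hi).2])
  rw [Finset.prod_congr rfl h2]
  rw [Fintype.prod_option (fun o => (o.elim y v) ^ (univ.filter (fun i => σ i = o)).card)]
  rfl

end Alg
end S0Cutoff

open S0Cutoff in
/-- over bounded variables `B` (axiom `s^{b s} = 0`) and periodic
variables `P` (axiom `s^{p s} = 1`), if the period of `s₀ ∈ P` divides all
periods, then every product of linear terms `s₀ + Σ_{s∈W} s` (with
`∅ ≠ W ⊆ (B ∪ P) \ {s₀}`) of length exceeding `Σ_B (b s − 1) + Σ_P (p s − 1)`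
has a strict subproduct with the same normal form (i.e. equal value in every
model). -/
theorem s0_anchored_cutoff_dvd
    {B P : Type*} [Fintype B] [Fintype P]
    (b : B → ℕ) (p : P → ℕ) (hb : ∀ s, 2 ≤ b s) (hp : ∀ s, 1 ≤ p s)
    (s₀ : P) (hdvd : ∀ s, p s₀ ∣ p s)
    (l : List (Finset (B ⊕ P))) (hne : ∀ W ∈ l, W.Nonempty)
    (hs₀ : ∀ W ∈ l, Sum.inr s₀ ∉ W)
    (hlen : (∑ s : B, (b s - 1)) + ∑ s : P, (p s - 1) < l.length) :
    ∃ l' : List (Finset (B ⊕ P)), l'.Sublist l ∧ l' ≠ l ∧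
      ∀ (R : Type) [CommSemiring R], (∀ a : R, a + a = a) →
        ∀ v : B ⊕ P → R, (∀ s : B, v (Sum.inl s) ^ b s = 0) →
          (∀ s : P, v (Sum.inr s) ^ p s = 1) →
          (l'.map fun W => v (Sum.inr s₀) + ∑ x ∈ W, v x).prod =
            (l.map fun W => v (Sum.inr s₀) + ∑ x ∈ W, v x).prod := by
  classical
  set W' : Fin l.length → Finset (B ⊕ P) := fun i => l.get i with hW'
  set cap : (B ⊕ P) → ℕ :=
    Sum.elim (fun s => b s - 1) (fun s => if s = s₀ then 0 else p s - 1) with hcapdef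
  have hcap : (∑ x : B ⊕ P, cap x) + p s₀ ≤ l.length := by
    have h1 : ∑ x : B ⊕ P, cap x
        = (∑ s : B, (b s - 1)) + ∑ s : P, (if s = s₀ then 0 else p s - 1) := by
      rw [hcapdef, Fintype.sum_sum_type]
      simp only [Sum.elim_inl, Sum.elim_inr]
    have e1 : (p s₀ - 1) + ∑ s ∈ Finset.univ.erase s₀, (p s - 1) = ∑ s : P, (p s - 1) :=
      Finset.add_sum_erase Finset.univ (fun s => p s - 1) (Finset.mem_univ s₀)
    have e2 := Finset.add_sum_erase Finset.univ
      (fun s => if s = s₀ then 0 else p s - 1) (Finset.mem_univ s₀)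
    simp only [eq_self_iff_true, if_true, zero_add] at e2
    have e3 : ∑ s ∈ Finset.univ.erase s₀, (if s = s₀ then 0 else p s - 1)
        = ∑ s ∈ Finset.univ.erase s₀, (p s - 1) :=
      Finset.sum_congr rfl (fun s hs => if_neg (Finset.ne_of_mem_erase hs))
    have := hp s₀
    omega
  obtain ⟨S', hS'sub, hS'card, hS'prop⟩ := iter W' cap (p s₀) Finset.univ (by
    rw [Finset.card_univ, Fintype.card_fin]; exact hcap)
  rw [Finset.card_univ, Fintype.card_fin] at hS'card
  set mlist := (List.finRange l.length).filter (fun i => i ∈ S') with hmlist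
  set l' := mlist.map l.get with hl'def
  have hmnodup : mlist.Nodup := (List.nodup_finRange _).filter _
  have hmtf : mlist.toFinset = S' := by
    ext i
    simp only [hmlist, List.mem_toFinset, List.mem_filter, List.mem_finRange, true_and,
      decide_eq_true_eq]
  have hmlen : mlist.length = S'.card := by
    rw [← hmtf, List.toFinset_card_of_nodup hmnodup]
  have hsub : l'.Sublist l := by
    have h1 : mlist.Sublist (List.finRange l.length) := List.filter_sublist
    have h2 := h1.map l.get
    rwa [List.map_get_finRange] at h2
  have hlne : l' ≠ l := by
    intro h
    have : l'.length = l.length := by rw [h]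
    rw [hl'def, List.length_map, hmlen] at this
    have := hp s₀
    omega
  refine ⟨l', hsub, hlne, ?_⟩
  intro R _ hidem v hb0 hp1
  set y := v (Sum.inr s₀) with hy
  set val : Option (B ⊕ P) → R := fun o => o.elim y v with hval
  set F : Finset (B ⊕ P) → R := fun Ws => y + ∑ x ∈ Ws, v x with hF
  show (l'.map F).prod = (l.map F).prod
  set O : Fin l.length → Finset (Option (B ⊕ P)) :=
    fun i => Finset.insertNone (W' i) with hO
  set O' : Fin l.length → Finset (Option (B ⊕ P)) :=
    fun i => if i ∈ S' then Finset.insertNone (W' i) else {none} with hO'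
  have hOsum : ∀ Ws : Finset (B ⊕ P), ∑ o ∈ Finset.insertNone Ws, val o = F Ws := by
    intro Ws
    rw [Finset.sum_insertNone]
    rfl
  have hexp : ∀ Of : Fin l.length → Finset (Option (B ⊕ P)),
      (∏ i, (∑ o ∈ Of i, val o)) = ∑ σ ∈ Fintype.piFinset Of, ∏ i, val (σ i) :=
    fun Of => Finset.prod_univ_sum Of (fun _ o => val o)
  have hlprod : (l.map F).prod = ∏ i, F (W' i) := by
    conv_lhs => rw [← List.map_get_finRange l, List.map_map]
    rw [← Fin.prod_univ_def]
    rfl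
  have hl'prod : (l'.map F).prod = ∏ i ∈ S', F (W' i) := by
    have h1 : l'.map F = mlist.map (fun i => F (W' i)) := by
      rw [hl'def, List.map_map]
      rfl
    rw [h1, ← List.prod_toFinset _ hmnodup, hmtf]
  have hO'prod : (∏ i, (∑ o ∈ O' i, val o)) = (l'.map F).prod := by
    have hite : ∀ i, (∑ o ∈ O' i, val o) = if i ∈ S' then F (W' i) else y := by
      intro i
      by_cases hi : i ∈ S'
      · simp only [hO', if_pos hi]
        exact hOsum _
      · simp only [hO', if_neg hi, Finset.sum_singleton]
        rfl
    rw [Finset.prod_congr rfl (fun i _ => hite i), Finset.prod_ite]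
    have hf1 : Finset.univ.filter (fun i => i ∈ S') = S' := by
      ext i; simp
    have hcc : (Finset.univ.filter (fun i : Fin l.length => ¬ i ∈ S')).card = p s₀ := by
      have h := Finset.card_filter_add_card_filter_not
        (s := (Finset.univ : Finset (Fin l.length))) (p := fun i => i ∈ S')
      rw [hf1, Finset.card_univ, Fintype.card_fin] at h
      omega
    rw [Finset.prod_const, hcc, hf1, hp1 s₀, mul_one, hl'prod]
  -- the two expansions
  have hOsub : Fintype.piFinset O' ⊆ Fintype.piFinset O := by
    intro σ hσ
    rw [Fintype.mem_piFinset] at hσ ⊢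
    intro i
    have hi := hσ i
    by_cases h : i ∈ S'
    · simp only [hO', if_pos h] at hi
      simpa only [hO] using hi
    · simp only [hO', if_neg h, Finset.mem_singleton] at hi
      rw [hi]
      simp only [hO]
      exact Finset.none_mem_insertNone
  have habsorb : ∀ σ ∈ Fintype.piFinset O,
      (∏ i, val (σ i)) + (∑ τ ∈ Fintype.piFinset O', ∏ i, val (τ i))
        = ∑ τ ∈ Fintype.piFinset O', ∏ i, val (τ i) := by
    intro σ hσmem
    rw [Fintype.mem_piFinset] at hσmem
    have hadm : adm W' Finset.univ σ := by
      intro i x hx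
      refine ⟨Finset.mem_univ i, ?_⟩
      have hi := hσmem i
      simp only [hO] at hi
      rw [hx] at hi
      exact Finset.some_mem_insertNone.1 hi
    by_cases hzero : ∃ s : B, b s ≤ cnt σ (Sum.inl s)
    · obtain ⟨s, hs⟩ := hzero
      have hz : (∏ i, val (σ i)) = 0 := by
        have hpv : (∏ i, val (σ i)) = y ^ nones σ * ∏ x, v x ^ cnt σ x := prod_val y v σ
        have hfac : v (Sum.inl s) ^ cnt σ (Sum.inl s) = 0 := by
          obtain ⟨c, hc⟩ := Nat.exists_eq_add_of_le hs
          rw [hc, pow_add, hb0 s, zero_mul]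
        rw [hpv, Finset.prod_eq_zero (Finset.mem_univ (Sum.inl s)) hfac, mul_zero]
      rw [hz, zero_add]
    · push_neg at hzero
      set m : (B ⊕ P) → ℕ :=
        Sum.elim (fun s => cnt σ (Sum.inl s)) (fun s => cnt σ (Sum.inr s) % p s) with hm
      have hmle : ∀ x, m x ≤ cnt σ x := by
        rintro (s | s)
        · exact le_refl _
        · exact Nat.mod_le _ _
      obtain ⟨σ₁, hσ₁a, hσ₁c⟩ := trim W' Finset.univ σ hadm m hmle
      have hs₀cnt : cnt σ (Sum.inr s₀) = 0 := by
        apply cnt_eq_zero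
        intro i hi
        have hmem : Sum.inr s₀ ∈ W' i := (hadm i _ hi).2
        exact hs₀ (l.get i) (List.get_mem l i) hmem
      have hσ₁s : small cap σ₁ := by
        rintro (s | s)
        · rw [hσ₁c]
          have := hzero s
          simp only [hm, hcapdef, Sum.elim_inl]
          omega
        · rw [hσ₁c]
          by_cases hss : s = s₀
          · subst hss
            simp only [hm, hcapdef, Sum.elim_inr, hs₀cnt]
            simp
          · simp only [hm, hcapdef, Sum.elim_inr, if_neg hss]
            have h1 := hp s
            have h2 := Nat.mod_lt (cnt σ (Sum.inr s)) (show 0 < p s by omega)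
            omega
      obtain ⟨σ', hσ'a, hσ'c⟩ := hS'prop σ₁ hσ₁a hσ₁s
      have hcnteq : ∀ x, cnt σ' x = m x := fun x => (hσ'c x).trans (hσ₁c x)
      have hσ'mem : σ' ∈ Fintype.piFinset O' := by
        rw [Fintype.mem_piFinset]
        intro i
        by_cases hi : i ∈ S'
        · simp only [hO', if_pos hi]
          cases hx : σ' i with
          | none => exact Finset.none_mem_insertNone
          | some x => exact Finset.some_mem_insertNone.2 (hσ'a i x hx).2
        · simp only [hO', if_neg hi, Finset.mem_singleton]
          cases hx : σ' i with
          | none => rfl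
          | some x => exact absurd (hσ'a i x hx).1 hi
      have hmono : (∏ i, val (σ' i)) = ∏ i, val (σ i) := by
        rw [show (∏ i, val (σ' i)) = ∏ i, (σ' i).elim y v from rfl,
          show (∏ i, val (σ i)) = ∏ i, (σ i).elim y v from rfl,
          prod_val y v σ', prod_val y v σ]
        have hTc : (∑ x, cnt σ' x) ≡ (∑ x, cnt σ x) [MOD p s₀] := by
          apply modeq_sum
          rintro (s | s) _
          · rw [hcnteq, hm]
            rfl
          · rw [hcnteq]
            simp only [hm, Sum.elim_inr]
            exact (Nat.mod_modEq _ _).of_dvd (hdvd s)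
        have h1 := nones_add_sum_cnt σ
        have h2 := nones_add_sum_cnt σ'
        have hnon : nones σ' ≡ nones σ [MOD p s₀] := by
          have h3 : nones σ' + (∑ x, cnt σ x) ≡ nones σ' + (∑ x, cnt σ' x) [MOD p s₀] :=
            Nat.ModEq.add_left _ hTc.symm
          have h4 : nones σ' + (∑ x, cnt σ' x) = nones σ + (∑ x, cnt σ x) := by omega
          rw [h4] at h3
          exact Nat.ModEq.add_right_cancel' _ h3
        congr 1
        · exact pow_eq_of_modEq (hp1 s₀) hnon
        · rw [Fintype.prod_sum_type, Fintype.prod_sum_type]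
          congr 1
          · refine Finset.prod_congr rfl (fun s _ => ?_)
            rw [hcnteq]
            simp only [hm, Sum.elim_inl]
          · refine Finset.prod_congr rfl (fun s _ => ?_)
            rw [hcnteq]
            simp only [hm, Sum.elim_inr]
            exact (pow_eq_pow_mod_of_pow_eq_one (hp1 s) _).symm
      rw [← hmono]
      exact absorb_mem hidem (f := fun τ => ∏ i, val (τ i)) hσ'mem
  have hfinal : (∑ σ ∈ Fintype.piFinset O, ∏ i, val (σ i))
      = ∑ σ ∈ Fintype.piFinset O', ∏ i, val (σ i) := by
    have hA := sum_subset_absorb hidem (f := fun τ : Fin l.length → Option (B ⊕ P) => ∏ i, val (τ i)) hOsub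
    have hB := sum_absorb hidem (f := fun τ : Fin l.length → Option (B ⊕ P) => ∏ i, val (τ i)) habsorb
    calc (∑ σ ∈ Fintype.piFinset O, ∏ i, val (σ i))
        = (∑ σ ∈ Fintype.piFinset O', ∏ i, val (σ i))
          + ∑ σ ∈ Fintype.piFinset O, ∏ i, val (σ i) := hA.symm
      _ = (∑ σ ∈ Fintype.piFinset O, ∏ i, val (σ i))
          + ∑ σ ∈ Fintype.piFinset O', ∏ i, val (σ i) := add_comm _ _
      _ = ∑ σ ∈ Fintype.piFinset O', ∏ i, val (σ i) := hB
  have hOfac : ∀ i, F (W' i) = ∑ o ∈ O i, val o := fun i => (hOsum (W' i)).symm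
  rw [hlprod, Finset.prod_congr rfl (fun i _ => hOfac i), hexp O, hfinal, ← hexp O', hO'prod]
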